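/- Suppose an MDD (with no long edges) over nonempty current domains D_1,...,D_n is uniqueness reduced and represents a nonempty, domain entailed constraint. Then every layer 1..n contains exactly one node, i.e., the MDD is a path of n+1 nodes from root to terminal, and each node in layer i has exactly |D_i| outgoing edges, all to the node in layer i+1. -/

import Mathlib

/-- A path in a labeled multigraph: `Reaches E u Q w` means the list of edges `Q`
(each edge a triple (source, value label, destination)) forms a path from `u` to `w`. -/
inductive Reaches {V : Type} (E : Finset (V × ℕ × V)) : V → List (V × ℕ × V) → V → Prop
  | nil (u : V) : Reaches E u [] u
  | cons {u c w : V} {v : ℕ} {Q : List (V × ℕ × V)} :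
      (u, v, c) ∈ E → Reaches E c Q w → Reaches E u ((u, v, c) :: Q) w

/-- The set of solutions of an MDD with long-edge semantics: a full assignment
`ρ` (with `ρ i ∈ D i` for `1 ≤ i ≤ n`) is a solution iff there is a root-to-terminal
path `Q` such that for each layer `i` either some edge of `Q` leaves layer `i` with
label `ρ i`, or `i` is earlier than the root's layer, or some (long) edge of `Q`
strictly skips layer `i`. -/
def Sols {V : Type} (n : ℕ) (D : ℕ → Finset ℕ) (E : Finset (V × ℕ × V))
    (layer : V → ℕ) (root terminal : V) : Set (ℕ → ℕ) :=
  { ρ | (∀ i ∈ Finset.Icc 1 n, ρ i ∈ D i) ∧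
    ∃ Q, Reaches E root Q terminal ∧
      ∀ i ∈ Finset.Icc 1 n,
        (∃ e ∈ Q, layer e.1 = i ∧ e.2.1 = ρ i) ∨ i < layer root ∨
        (∃ e ∈ Q, layer e.1 < i ∧ i < layer e.2.2) }

namespace Stmt9Aux

variable {V : Type} {E : Finset (V × ℕ × V)} {layer : V → ℕ}

lemma edges_mem {s w : V} {Q : List (V × ℕ × V)} (h : Reaches E s Q w) :
    ∀ e ∈ Q, e ∈ E := by
  induction h with
  | nil => simp
  | cons he _ ih =>
    intro e hm
    rcases List.mem_cons.1 hm with rfl | hm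
    · exact he
    · exact ih e hm

lemma nil_eq {s w : V} (h : Reaches E s [] w) : s = w := by
  cases h; rfl

lemma reaches_append {s m : V} {Q : List (V × ℕ × V)} (h : Reaches E s Q m) {v : ℕ} {c : V}
    (he : (m, v, c) ∈ E) : Reaches E s (Q ++ [(m, v, c)]) c := by
  induction h with
  | nil => exact Reaches.cons he (Reaches.nil c)
  | cons he' _ ih => exact Reaches.cons he' (ih he)

lemma layer_end (hconsec : ∀ e ∈ E, layer e.2.2 = layer e.1 + 1)
    {s w : V} {Q : List (V × ℕ × V)} (h : Reaches E s Q w) :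
    layer w = layer s + Q.length := by
  induction h with
  | nil => simp
  | @cons u c w v Q he _ ih =>
    have hc : layer c = layer u + 1 := hconsec _ he
    simp only [List.length_cons]
    omega

lemma src_bounds (hconsec : ∀ e ∈ E, layer e.2.2 = layer e.1 + 1)
    {s w : V} {Q : List (V × ℕ × V)} (h : Reaches E s Q w) :
    ∀ e ∈ Q, layer s ≤ layer e.1 ∧ layer e.1 < layer w := by
  induction h with
  | nil => simp
  | @cons u c w v Q he h' ih =>
    intro e hm
    have hc : layer c = layer u + 1 := hconsec _ he
    have hcw := layer_end hconsec h'
    rcases List.mem_cons.1 hm with rfl | hm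
    · refine ⟨le_refl _, ?_⟩
      show layer u < layer w
      omega
    · have := ih e hm
      omega

lemma layer_injOn (hconsec : ∀ e ∈ E, layer e.2.2 = layer e.1 + 1)
    {s w : V} {Q : List (V × ℕ × V)} (h : Reaches E s Q w) :
    ∀ e ∈ Q, ∀ e' ∈ Q, layer e.1 = layer e'.1 → e = e' := by
  induction h with
  | nil => simp
  | @cons a b z vv QQ he h' ih =>
    intro e hm e' hm' hl
    have hc : layer b = layer a + 1 := hconsec _ he
    rcases List.mem_cons.1 hm with rfl | hm <;> rcases List.mem_cons.1 hm' with rfl | hm'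
    · rfl
    · exact absurd hl (by have := (src_bounds hconsec h' e' hm').1
                          show layer a ≠ layer e'.1; omega)
    · exact absurd hl (by have := (src_bounds hconsec h' e hm).1
                          show layer e.1 ≠ layer a; omega)
    · exact ih e hm e' hm' hl

lemma cons_inv {s w : V} {Q : List (V × ℕ × V)} (h : Reaches E s Q w) (hne : Q ≠ []) :
    ∃ v c Q', Q = (s, v, c) :: Q' ∧ (s, v, c) ∈ E ∧ Reaches E c Q' w := by
  cases h with
  | nil => exact absurd rfl hne
  | cons he h' => exact ⟨_, _, _, rfl, he, h'⟩

lemma reaches_prefix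
    (hdistinct : ∀ (u c c' : V) (w : ℕ), (u, w, c) ∈ E → (u, w, c') ∈ E → c = c')
    {s u : V} {Q0 : List (V × ℕ × V)} (h0 : Reaches E s Q0 u) :
    ∀ {w : V} {Q : List (V × ℕ × V)}, Reaches E s Q w → Q0.length ≤ Q.length →
      (∀ e ∈ Q, ∀ e' ∈ Q0, layer e.1 = layer e'.1 → e.2.1 = e'.2.1) →
      ∃ Q1, Reaches E u Q1 w ∧ ∀ e ∈ Q1, e ∈ Q := by
  induction h0 with
  | nil => exact fun h _ _ => ⟨_, h, fun e he => he⟩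
  | @cons a b z vv QQ he h0' ih =>
    intro w Q h hlen hl
    have hne : Q ≠ [] := by intro hQ; subst hQ; simp at hlen
    obtain ⟨vv', b', QQ', rfl, he', h'⟩ := cons_inv h hne
    have hv : vv' = vv :=
      hl (a, vv', b') List.mem_cons_self (a, vv, b) List.mem_cons_self rfl
    have hc : b' = b := hdistinct a b' b vv (hv ▸ he') he
    subst hc
    obtain ⟨Q1, hQ1, hsub⟩ := ih h' (by simpa using hlen)
      (fun e hme e' hme' => hl e (List.mem_cons_of_mem _ hme) e' (List.mem_cons_of_mem _ hme'))
    exact ⟨Q1, hQ1, fun e hme => List.mem_cons_of_mem _ (hsub e hme)⟩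

end Stmt9Aux


/-- An MDD without long edges (every edge goes from a layer to the next,
root in layer 1, terminal in layer `n+1`, distinct outgoing labels, every non-terminal
node has an outgoing and every non-root node an incoming edge) over nonempty current
domains which is uniqueness reduced and represents a nonempty, domain entailed constraint
has exactly one node in each layer `1..n`, and each such node supports exactly the values
of the current domain of its layer (so it has exactly `|D i|` outgoing edges, all to the
unique node of the next layer). -/
theorem stmt9 {V : Type} [Fintype V] (n : ℕ) (D : ℕ → Finset ℕ)
    (E : Finset (V × ℕ × V)) (layer : V → ℕ) (root terminal : V)
    (hconsec : ∀ e ∈ E, layer e.2.2 = layer e.1 + 1)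
    (hlab : ∀ e ∈ E, e.2.1 ∈ D (layer e.1))
    (hdistinct : ∀ (u c c' : V) (w : ℕ), (u, w, c) ∈ E → (u, w, c') ∈ E → c = c')
    (hroot : layer root = 1) (hterm : layer terminal = n + 1)
    (hlayers : ∀ u : V, 1 ≤ layer u ∧ layer u ≤ n + 1)
    (hterm_uniq : ∀ u : V, layer u = n + 1 → u = terminal)
    (hroot_uniq : ∀ u : V, layer u = 1 → u = root)
    (hout : ∀ u : V, u ≠ terminal → ∃ w c, (u, w, c) ∈ E)
    (hin : ∀ u : V, u ≠ root → ∃ p w, (p, w, u) ∈ E)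
    (hD : ∀ i ∈ Finset.Icc 1 n, (D i).Nonempty)
    (huniq : ∀ u q : V, layer u = layer q →
      (∀ (w : ℕ) (c : V), (u, w, c) ∈ E ↔ (q, w, c) ∈ E) → u = q)
    (hnonempty : ∃ ρ : ℕ → ℕ, ρ ∈ Sols n D E layer root terminal)
    (hentailed : ∀ ρ : ℕ → ℕ, (∀ i ∈ Finset.Icc 1 n, ρ i ∈ D i) →
      ρ ∈ Sols n D E layer root terminal) :
    (∀ i ∈ Finset.Icc 1 n, ∃! u : V, layer u = i) ∧
    (∀ u : V, layer u ∈ Finset.Icc 1 n →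
      ∀ w : ℕ, w ∈ D (layer u) ↔ ∃ c : V, (u, w, c) ∈ E) := by
  classical
  -- every node is reachable from the root
  have hreach : ∀ u : V, ∃ Q, Reaches E root Q u := by
    have key : ∀ k (u : V), layer u ≤ k → ∃ Q, Reaches E root Q u := by
      intro k
      induction k with
      | zero => intro u hu; exact absurd hu (by have := (hlayers u).1; omega)
      | succ k ih =>
        intro u hu
        by_cases hu0 : u = root
        · rw [hu0]; exact ⟨[], Reaches.nil root⟩
        · obtain ⟨p, w, hp⟩ := hin u hu0
          have hc : layer u = layer p + 1 := hconsec _ hp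
          obtain ⟨Q, hQ⟩ := ih p (by omega)
          exact ⟨Q ++ [(p, w, u)], Stmt9Aux.reaches_append hQ hp⟩
    exact fun u => key (layer u) u le_rfl
  -- every node of a layer 1..n supports every value of the layer's domain
  have hsupp : ∀ u : V, 1 ≤ layer u → layer u ≤ n → ∀ w ∈ D (layer u), ∃ c, (u, w, c) ∈ E := by
    intro u hge hltn w hw
    obtain ⟨Q0, hQ0⟩ := hreach u
    obtain ⟨ρ, hρdef⟩ : ∃ ρ : ℕ → ℕ, ρ = fun j =>
        if h : ∃ e, e ∈ Q0 ∧ layer e.1 = j then h.choose.2.1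
        else if j = layer u then w
        else if h2 : (D j).Nonempty then h2.choose else 0 := ⟨_, rfl⟩
    have hQ0E := Stmt9Aux.edges_mem hQ0
    have hQ0len : layer u = 1 + Q0.length := by
      have := Stmt9Aux.layer_end hconsec hQ0; rw [hroot] at this; omega
    have hQ0lt : ∀ e ∈ Q0, 1 ≤ layer e.1 ∧ layer e.1 < layer u := by
      intro e he
      have := Stmt9Aux.src_bounds hconsec hQ0 e he
      rwa [hroot] at this
    have f1 : ∀ e ∈ Q0, ρ (layer e.1) = e.2.1 := by
      intro e he
      have hex : ∃ e', e' ∈ Q0 ∧ layer e'.1 = layer e.1 := ⟨e, he, rfl⟩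
      have hspec := hex.choose_spec
      have heq : hex.choose = e := Stmt9Aux.layer_injOn hconsec hQ0 _ hspec.1 e he hspec.2
      simp only [hρdef, dif_pos hex, heq]
    have f2 : ρ (layer u) = w := by
      have hnotex : ¬ ∃ e, e ∈ Q0 ∧ layer e.1 = layer u := by
        rintro ⟨e, he, hle⟩
        exact absurd hle (by have := hQ0lt e he; omega)
      have hstep : ρ (layer u) = if h : ∃ e, e ∈ Q0 ∧ layer e.1 = layer u then h.choose.2.1
          else if layer u = layer u then w
          else if h2 : (D (layer u)).Nonempty then h2.choose else 0 := by rw [hρdef]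
      rw [hstep, dif_neg hnotex, if_pos rfl]
    have f3 : ∀ j ∈ Finset.Icc 1 n, ρ j ∈ D j := by
      intro j hj
      by_cases hex : ∃ e, e ∈ Q0 ∧ layer e.1 = j
      · have hspec := hex.choose_spec
        have := hlab _ (hQ0E _ hspec.1)
        rw [hspec.2] at this
        simpa only [hρdef, dif_pos hex] using this
      · by_cases hji : j = layer u
        · simp only [hρdef, dif_neg hex, if_pos hji]; rw [hji]; exact hw
        · have hne := hD j hj
          simp only [hρdef, dif_neg hex, if_neg hji, dif_pos hne]
          exact hne.choose_spec
    obtain ⟨hρD, Q, hQ, hprop⟩ := hentailed ρ f3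
    have hQE := Stmt9Aux.edges_mem hQ
    have hQlab : ∀ j ∈ Finset.Icc 1 n, ∃ e ∈ Q, layer e.1 = j ∧ e.2.1 = ρ j := by
      intro j hj
      simp only [Finset.mem_Icc] at hj
      rcases hprop j (by simp [Finset.mem_Icc]; omega) with h | h | ⟨e, he, h1, h2⟩
      · exact h
      · rw [hroot] at h; omega
      · have := hconsec e (hQE e he); omega
    have hQinj := Stmt9Aux.layer_injOn hconsec hQ
    have hQlen : Q.length = n := by
      have := Stmt9Aux.layer_end hconsec hQ; rw [hroot, hterm] at this; omega
    obtain ⟨Q1, hQ1, hQ1sub⟩ := Stmt9Aux.reaches_prefix (layer := layer) hdistinct hQ0 hQ (by omega)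
      (by
        intro e he e' he' hll
        have hb := hQ0lt e' he'
        obtain ⟨e'', he'', hl'', hlab''⟩ := hQlab (layer e'.1)
          (by simp only [Finset.mem_Icc]; omega)
        have heq : e = e'' := hQinj e he e'' he'' (by omega)
        rw [heq, hlab'', f1 e' he'])
    have hunt : u ≠ terminal := by
      intro h; rw [h, hterm] at hltn; omega
    obtain ⟨v1, c1, Q1', hQ1eq, he1, _⟩ := Stmt9Aux.cons_inv hQ1 (by
      intro h; subst h; exact hunt (Stmt9Aux.nil_eq hQ1))
    have hhead : (u, v1, c1) ∈ Q := hQ1sub _ (by rw [hQ1eq]; exact List.mem_cons_self)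
    obtain ⟨e, he, hle, hlabe⟩ := hQlab (layer u) (by simp only [Finset.mem_Icc]; omega)
    have heq : e = (u, v1, c1) := hQinj e he _ hhead (by simpa using hle)
    rw [heq, f2] at hlabe
    exact ⟨c1, hlabe ▸ he1⟩
  have part2 : ∀ u : V, layer u ∈ Finset.Icc 1 n →
      ∀ w : ℕ, w ∈ D (layer u) ↔ ∃ c : V, (u, w, c) ∈ E := by
    intro u hu w
    simp only [Finset.mem_Icc] at hu
    constructor
    · exact fun hw => hsupp u hu.1 hu.2 w hw
    · rintro ⟨c, hc⟩; exact hlab _ hc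
  refine ⟨?_, part2⟩
  -- uniqueness per layer by downward induction
  have huniq_layer : ∀ k, ∀ u q : V, layer u = n + 1 - k → layer q = n + 1 - k → u = q := by
    intro k
    induction k with
    | zero =>
      intro u q hu hq
      simp only [Nat.sub_zero] at hu hq
      rw [hterm_uniq u hu, hterm_uniq q hq]
    | succ k ih =>
      intro u q hu hq
      have h1u : 1 ≤ layer u := (hlayers u).1
      have step : ∀ a b : V, layer a = n + 1 - (k + 1) → layer b = n + 1 - (k + 1) →
          ∀ w c, (a, w, c) ∈ E → (b, w, c) ∈ E := by
        intro a b ha hb w c hce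
        have h1a : 1 ≤ layer a := (hlayers a).1
        have h1b : 1 ≤ layer b := (hlayers b).1
        have hw : w ∈ D (layer a) := hlab _ hce
        obtain ⟨c', hc'⟩ := hsupp b h1b (by omega) w (by
          have : layer b = layer a := by omega
          rwa [this])
        have hca : layer c = layer a + 1 := hconsec _ hce
        have hcb : layer c' = layer b + 1 := hconsec _ hc'
        have : c' = c := ih c' c (by omega) (by omega)
        rwa [← this]
      exact huniq u q (by omega) (fun w c => ⟨step u q hu hq w c, step q u hq hu w c⟩)
  -- existence per layer
  have hex : ∀ i : ℕ, 1 ≤ i → i ≤ n + 1 → ∃ u : V, layer u = i := by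
    intro i
    induction i with
    | zero => exact fun h _ => absurd h (by omega)
    | succ i ih =>
      intro _ hle
      by_cases hi0 : i = 0
      · subst hi0; exact ⟨root, hroot⟩
      · obtain ⟨u, hu⟩ := ih (by omega) (by omega)
        have hunt : u ≠ terminal := by intro h; rw [h, hterm] at hu; omega
        obtain ⟨w, c, hc⟩ := hout u hunt
        have : layer c = layer u + 1 := hconsec _ hc
        exact ⟨c, by omega⟩
  intro i hi
  simp only [Finset.mem_Icc] at hi
  obtain ⟨u, hu⟩ := hex i hi.1 (by omega)
  exact ⟨u, hu, fun q hq => huniq_layer (n + 1 - i) q u (by omega) (by omega)⟩
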